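/- Let n ≥ 1 and k ≥ 1 be integers and a_1, …, a_{3n} positive integers with k/4 < a_i < k/2 for each i and a_1 + ⋯ + a_{3n} = nk. Construct the graph G = G_{A,k} as follows: take 3n pairwise disjoint copies K^(1), …, K^(3n) of the complete bipartite graph K_{2k,2k−1}, and in K^(i) let X^(i) denote the part of size 2k; add three new vertices u, v, w; for each i, partition X^(i) into three sets of sizes 2a_i, k − a_i, and k − a_i, and join every vertex of the first set to u, every vertex of the second set to v, and every vertex of the third set to w. Then reg(G_{A,k}) ≤ n if and only if {a_1, …, a_{3n}} can be partitioned into n disjoint sets A_1, …, A_n with Σ_{a ∈ A_j} a = k for every j. -/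

import Mathlib

open SimpleGraph

variable {V : Type*}

/-- The number of edges of the edge set `F` incident with the vertex `v`. -/
noncomputable def edgeDeg (F : Set (Sym2 V)) (v : V) : ℕ := {e ∈ F | v ∈ e}.ncard

/-- The subgraph induced by the edge set `F` (on the vertices incident with edges of `F`)
is `r`-regular: every vertex incident with an edge of `F` lies on exactly `r` edges of `F`. -/
def IsRegularEdgeSet (F : Set (Sym2 V)) (r : ℕ) : Prop :=
  ∀ v : V, (∃ e ∈ F, v ∈ e) → edgeDeg F v = r

/-- `P` is a partition of the edge set of `G` into `t` nonempty parts, each of which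
induces a regular subgraph. -/
def IsRegularPartition (G : SimpleGraph V) {t : ℕ} (P : Fin t → Set (Sym2 V)) : Prop :=
  (∀ i, (P i).Nonempty) ∧ (∀ i j, i ≠ j → Disjoint (P i) (P j)) ∧
    (⋃ i, P i) = G.edgeSet ∧ ∀ i, ∃ r, IsRegularEdgeSet (P i) r

/-- The regular number of `G`: the minimum number of parts in a partition of the edge set of `G`
into nonempty subsets each of which induces a regular subgraph. -/
noncomputable def regNum (G : SimpleGraph V) : ℕ :=
  sInf {t | ∃ P : Fin t → Set (Sym2 V), IsRegularPartition G P}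

/-- `C` is a proper edge coloring of `G` with `n` colors: edges sharing a vertex get
distinct colors. -/
def IsProperEdgeColoring (G : SimpleGraph V) {n : ℕ} (C : Sym2 V → Fin n) : Prop :=
  ∀ e₁ ∈ G.edgeSet, ∀ e₂ ∈ G.edgeSet, e₁ ≠ e₂ → (∃ x, x ∈ e₁ ∧ x ∈ e₂) → C e₁ ≠ C e₂

/-- The edge chromatic number of `G`: the minimum number of colors of a proper edge coloring. -/
noncomputable def edgeChromNum (G : SimpleGraph V) : ℕ :=
  sInf {n | ∃ C : Sym2 V → Fin n, IsProperEdgeColoring G C}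

/-- The graph `G_{A,k}`: `3n` disjoint copies of the complete bipartite graph `K_{2k,2k-1}`
(copy `i` has parts `Fin (2k)` and `Fin (2k-1)`), together with three extra vertices
`u = 2`... namely `Sum.inr 0 = u`, `Sum.inr 1 = v`, `Sum.inr 2 = w`; the vertex `x` of the
part `X⁽ⁱ⁾ = Fin (2k)` of copy `i` is joined to the extra vertex `σ i x`. -/
def gadgetGraph (n k : ℕ) (σ : Fin (3 * n) → Fin (2 * k) → Fin 3) :
    SimpleGraph ((Fin (3 * n) × (Fin (2 * k) ⊕ Fin (2 * k - 1))) ⊕ Fin 3) :=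
  SimpleGraph.fromRel (fun p q =>
    match p, q with
    | Sum.inl (i, Sum.inl _), Sum.inl (j, Sum.inr _) => i = j
    | Sum.inl (i, Sum.inl x), Sum.inr c => σ i x = c
    | _, _ => False)

section Gadget

variable {n k : ℕ}

/-- Vertex type of the gadget graph. -/
abbrev GV (n k : ℕ) := (Fin (3 * n) × (Fin (2 * k) ⊕ Fin (2 * k - 1))) ⊕ Fin 3

def Xv (i : Fin (3 * n)) (x : Fin (2 * k)) : GV n k := Sum.inl (i, Sum.inl x)
def Yv (i : Fin (3 * n)) (y : Fin (2 * k - 1)) : GV n k := Sum.inl (i, Sum.inr y)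
def Uv (c : Fin 3) : GV n k := Sum.inr c

variable {σ : Fin (3 * n) → Fin (2 * k) → Fin 3}

lemma adj_Xv {i x w} : (gadgetGraph n k σ).Adj (Xv i x) w ↔
    (∃ y, w = Yv i y) ∨ w = Uv (σ i x) := by
  rcases w with ⟨j, x' | y'⟩ | c <;>
    simp [gadgetGraph, Xv, Yv, Uv, eq_comm, and_comm]

lemma adj_Yv {i y w} : (gadgetGraph n k σ).Adj (Yv i y) w ↔ ∃ x, w = Xv i x := by
  rcases w with ⟨j, x' | y'⟩ | c <;>
    simp [gadgetGraph, Xv, Yv, Uv, eq_comm]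

lemma adj_Uv {c w} : (gadgetGraph n k σ).Adj (Uv c) w ↔
    ∃ i x, w = Xv i x ∧ σ i x = c := by
  rcases w with ⟨j, x' | y'⟩ | c' <;>
    simp [gadgetGraph, Xv, Yv, Uv, eq_comm]

end Gadget
section Gadget2

variable {n k : ℕ} {σ : Fin (3 * n) → Fin (2 * k) → Fin 3}

lemma Xv_injective {i : Fin (3 * n)} : Function.Injective (Xv (k := k) i) := by
  intro a b h; simpa [Xv] using h

lemma Xv_inj {i i' : Fin (3 * n)} {x x' : Fin (2 * k)} :
    (Xv i x : GV n k) = Xv i' x' ↔ i = i' ∧ x = x' := by simp [Xv]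

lemma Yv_injective {i : Fin (3 * n)} : Function.Injective (Yv (n := n) (k := k) i) := by
  intro a b h; simpa [Yv] using h

/-- `edgeDeg` as the number of "other endpoints". -/
lemma edgeDeg_eq_ncard {V : Type*} (F : Set (Sym2 V)) (v : V) :
    edgeDeg F v = {w | s(v, w) ∈ F}.ncard := by
  have himg : {e ∈ F | v ∈ e} = (fun w => s(v, w)) '' {w | s(v, w) ∈ F} := by
    ext e
    constructor
    · rintro ⟨heF, hv⟩
      obtain ⟨w, rfl⟩ := Sym2.mem_iff_exists.1 hv
      exact ⟨w, heF, rfl⟩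
    · rintro ⟨w, hw, rfl⟩
      exact ⟨hw, Sym2.mem_mk_left v w⟩
  rw [edgeDeg, himg, Set.ncard_image_of_injective _ (fun w₁ w₂ h => Sym2.congr_right.mp h)]

lemma mem_mem_adj {V : Type*} {G : SimpleGraph V} {e : Sym2 V} {a b : V}
    (he : e ∈ G.edgeSet) (ha : a ∈ e) (hb : b ∈ e) (hab : a ≠ b) : G.Adj a b := by
  have : e = s(a, b) := (Sym2.mem_and_mem_iff hab).1 ⟨ha, hb⟩
  rw [this] at he
  exact he

lemma edge_has_X {e : Sym2 (GV n k)} (he : e ∈ (gadgetGraph n k σ).edgeSet) :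
    ∃ i x, (Xv i x : GV n k) ∈ e := by
  induction e with
  | _ a b =>
    rw [SimpleGraph.mem_edgeSet] at he
    rcases a with ⟨i, x | y⟩ | c
    · exact ⟨i, x, Sym2.mem_mk_left _ _⟩
    · have := adj_Yv.mp he
      obtain ⟨x, rfl⟩ := this
      exact ⟨i, x, Sym2.mem_mk_right _ _⟩
    · have := adj_Uv.mp he
      obtain ⟨i, x, rfl, -⟩ := this
      exact ⟨i, x, Sym2.mem_mk_right _ _⟩

lemma X_not_adj_X {i i' : Fin (3 * n)} {x x'} :
    ¬ (gadgetGraph n k σ).Adj (Xv i x) (Xv i' x') := by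
  intro h
  rcases adj_Xv.mp h with ⟨y, hy⟩ | hy <;> simp [Xv, Yv, Uv] at hy

lemma X_unique {e : Sym2 (GV n k)} (he : e ∈ (gadgetGraph n k σ).edgeSet)
    {i i' x x'} (h1 : (Xv i x : GV n k) ∈ e) (h2 : (Xv i' x' : GV n k) ∈ e) :
    i = i' ∧ x = x' := by
  by_contra hne
  have hne' : (Xv i x : GV n k) ≠ Xv i' x' := by
    simpa [Xv_inj] using hne
  exact X_not_adj_X (mem_mem_adj he h1 h2 hne')

end Gadget2
section Gadget3

open Finset in
lemma ncard_setOf_eq_card_filter {α : Type*} [Fintype α] (p : α → Prop) [DecidablePred p] :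
    {x | p x}.ncard = (Finset.univ.filter p).card := by
  rw [Set.ncard_eq_toFinset_card', Set.toFinset_setOf]

variable {n k : ℕ}

open Finset in
lemma ncard_X_set (R : Fin (3 * n) → Fin (2 * k) → Prop) [∀ i, DecidablePred (R i)] :
    {w : GV n k | ∃ i x, w = Xv i x ∧ R i x}.ncard
      = ∑ i, (Finset.univ.filter fun x => R i x).card := by
  classical
  have hset : {w : GV n k | ∃ i x, w = Xv i x ∧ R i x}.toFinset
      = Finset.univ.biUnion (fun i => (Finset.univ.filter fun x => R i x).image (Xv i)) := by
    ext w
    simp only [Set.mem_toFinset, Set.mem_setOf_eq, Finset.mem_biUnion, Finset.mem_univ,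
      Finset.mem_image, Finset.mem_filter, true_and]
    constructor
    · rintro ⟨i, x, rfl, hr⟩; exact ⟨i, x, hr, rfl⟩
    · rintro ⟨i, x, hr, rfl⟩; exact ⟨i, x, rfl, hr⟩
  rw [Set.ncard_eq_toFinset_card', hset, Finset.card_biUnion]
  · exact Finset.sum_congr rfl fun i _ => Finset.card_image_of_injective _ Xv_injective
  · intro i _ j _ hij
    simp only [Finset.disjoint_left, Finset.mem_image, Finset.mem_filter]
    rintro w ⟨x, -, rfl⟩ ⟨x', -, hx'⟩
    exact hij ((Xv_inj.mp hx'.symm).1)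

lemma ncard_nbhdX (hk : 1 ≤ k) (i : Fin (3 * n)) (c : Fin 3) :
    {w : GV n k | (∃ y, w = Yv i y) ∨ w = Uv c}.ncard = 2 * k := by
  classical
  have hset : {w : GV n k | (∃ y, w = Yv i y) ∨ w = Uv c}.toFinset
      = (Finset.univ.image (Yv i)) ∪ {Uv c} := by
    ext w
    simp only [Set.mem_toFinset, Set.mem_setOf_eq, Finset.mem_union, Finset.mem_image,
      Finset.mem_univ, true_and, Finset.mem_singleton]
    constructor
    · rintro (⟨y, rfl⟩ | rfl); exacts [Or.inl ⟨y, rfl⟩, Or.inr rfl]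
    · rintro (⟨y, rfl⟩ | rfl); exacts [Or.inl ⟨y, rfl⟩, Or.inr rfl]
  rw [Set.ncard_eq_toFinset_card', hset, Finset.card_union_of_disjoint, Finset.card_image_of_injective _ Yv_injective]
  · simp only [Finset.card_univ, Fintype.card_fin, Finset.card_singleton]
    omega
  · simp only [Finset.disjoint_left, Finset.mem_image, Finset.mem_univ, true_and,
      Finset.mem_singleton]
    rintro w ⟨y, rfl⟩ hw
    simp [Yv, Uv] at hw

lemma ncard_nbhdY (i : Fin (3 * n)) :
    {w : GV n k | ∃ x, w = Xv i x}.ncard = 2 * k := by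
  classical
  have hset : {w : GV n k | ∃ x, w = Xv i x}.toFinset = Finset.univ.image (Xv i) := by
    ext w
    simp only [Set.mem_toFinset, Set.mem_setOf_eq, Finset.mem_image, Finset.mem_univ, true_and]
    constructor
    · rintro ⟨x, rfl⟩; exact ⟨x, rfl⟩
    · rintro ⟨x, rfl⟩; exact ⟨x, rfl⟩
  rw [Set.ncard_eq_toFinset_card', hset, Finset.card_image_of_injective _ Xv_injective]
  simp

lemma ncard_iUnion_fin {α : Type*} [Fintype α] {t : ℕ} (g : Fin t → Set α)
    (hd : ∀ i j, i ≠ j → Disjoint (g i) (g j)) :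
    (⋃ j, g j).ncard = ∑ j, (g j).ncard := by
  classical
  have hset : (⋃ j, g j).toFinset = Finset.univ.biUnion fun j => (g j).toFinset := by
    ext w; simp
  rw [Set.ncard_eq_toFinset_card', hset, Finset.card_biUnion]
  · exact Finset.sum_congr rfl fun j _ => (Set.ncard_eq_toFinset_card' _).symm
  · intro i _ j _ hij
    simpa [Finset.disjoint_left, Set.disjoint_left] using hd i j hij

end Gadget3
section Gadget4

lemma fiber_facts {m k : ℕ} (hk : 1 ≤ k) (a : Fin m → ℕ)
    (ha : ∀ i, k < 4 * a i ∧ 2 * a i < k) (s : Finset (Fin m))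
    (hs : ∑ i ∈ s, a i = k) : s.card = 3 ∧ ∑ i ∈ s, (k - a i) = 2 * k := by
  have hne : s.Nonempty := by
    rcases s.eq_empty_or_nonempty with rfl | h
    · simp at hs; omega
    · exact h
  have h4 : s.card * k < 4 * k := by
    have := Finset.sum_lt_sum_of_nonempty hne (fun i _ => (ha i).1)
    simp only [Finset.sum_const, smul_eq_mul] at this
    rw [← Finset.mul_sum, hs] at this
    exact this
  have h2 : 2 * k < s.card * k := by
    have := Finset.sum_lt_sum_of_nonempty hne (fun i _ => (ha i).2)
    simp only [Finset.sum_const, smul_eq_mul] at this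
    rw [← Finset.mul_sum, hs] at this
    exact this
  have hlt4 : s.card < 4 := by
    rw [mul_comm s.card k, mul_comm 4 k] at h4
    exact Nat.lt_of_mul_lt_mul_left h4
  have hgt2 : 2 < s.card := by
    rw [mul_comm s.card k, mul_comm 2 k] at h2
    exact Nat.lt_of_mul_lt_mul_left h2
  have hcard : s.card = 3 := by omega
  refine ⟨hcard, ?_⟩
  have hsub : ∑ i ∈ s, ((k - a i) + a i) = ∑ i ∈ s, k := by
    refine Finset.sum_congr rfl fun i _ => ?_
    have := (ha i).2; omega
  rw [Finset.sum_add_distrib, hs, Finset.sum_const, hcard, smul_eq_mul] at hsub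
  omega

variable {n k : ℕ} {σ : Fin (3 * n) → Fin (2 * k) → Fin 3}

lemma regNum_le_of_f (hk : 1 ≤ k) (a : Fin (3 * n) → ℕ)
    (ha : ∀ i, k < 4 * a i ∧ 2 * a i < k)
    (hσ0 : ∀ i, (Finset.univ.filter fun x => σ i x = 0).card = 2 * a i)
    (hσ1 : ∀ i, (Finset.univ.filter fun x => σ i x = 1).card = k - a i)
    (hσ2 : ∀ i, (Finset.univ.filter fun x => σ i x = 2).card = k - a i)
    (f : Fin (3 * n) → Fin n)
    (hf : ∀ j : Fin n, ∑ i ∈ Finset.univ.filter fun i => f i = j, a i = k) :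
    regNum (gadgetGraph n k σ) ≤ n := by
  classical
  set G := gadgetGraph n k σ with hG
  set P : Fin n → Set (Sym2 (GV n k)) :=
    fun j => {e | e ∈ G.edgeSet ∧ ∃ i x, (Xv i x : GV n k) ∈ e ∧ f i = j} with hP
  have hPsub : ∀ j, P j ⊆ G.edgeSet := fun j e he => he.1
  -- uniqueness of part
  have hPuniq : ∀ j j' e, e ∈ P j → e ∈ P j' → j = j' := by
    rintro j j' e ⟨he, i, x, hx, hfij⟩ ⟨-, i', x', hx', hfij'⟩
    obtain ⟨rfl, rfl⟩ := X_unique he hx hx'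
    rw [← hfij, ← hfij']
  -- the filter sets
  have hdegU : ∀ (j : Fin n) (c : Fin 3),
      {w : GV n k | s(Uv c, w) ∈ P j}.ncard = 2 * k := by
    intro j c
    have hseteq : {w : GV n k | s(Uv c, w) ∈ P j}
        = {w : GV n k | ∃ i x, w = Xv i x ∧ (f i = j ∧ σ i x = c)} := by
      ext w
      constructor
      · rintro ⟨hmem, i', x', hx', hfi'⟩
        obtain ⟨i, x, rfl, hc⟩ := adj_Uv.mp hmem
        have : (Xv i' x' : GV n k) = Uv c ∨ (Xv i' x' : GV n k) = Xv i x := by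
          simpa [Sym2.mem_iff] using hx'
        rcases this with h | h
        · simp [Xv, Uv] at h
        · obtain ⟨rfl, rfl⟩ := Xv_inj.mp h
          exact ⟨i', x', rfl, hfi', hc⟩
      · rintro ⟨i, x, rfl, hfij, hc⟩
        have hadj : G.Adj (Uv c) (Xv i x) := adj_Uv.mpr ⟨i, x, rfl, hc⟩
        exact ⟨hadj, i, x, Sym2.mem_mk_right _ _, hfij⟩
    rw [hseteq, ncard_X_set]
    have hsplit : ∀ i : Fin (3 * n),
        (Finset.univ.filter fun x => f i = j ∧ σ i x = c).card
          = if f i = j then (Finset.univ.filter fun x => σ i x = c).card else 0 := by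
      intro i
      split_ifs with h
      · congr 1; ext x; simp [h]
      · simp only [Finset.card_eq_zero]; ext x; simp [h]
    rw [Finset.sum_congr rfl fun i _ => hsplit i, ← Finset.sum_filter]
    obtain ⟨hcard3, hsum2⟩ := fiber_facts hk a ha _ (hf j)
    have hc0 : c = 0 ∨ c = 1 ∨ c = 2 := by omega
    rcases hc0 with rfl | rfl | rfl
    · calc ∑ i ∈ Finset.univ.filter (fun i => f i = j),
            (Finset.univ.filter fun x => σ i x = 0).card
          = ∑ i ∈ Finset.univ.filter (fun i => f i = j), 2 * a i :=
            Finset.sum_congr rfl fun i _ => by rw [← hσ0 i]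
        _ = 2 * k := by rw [← Finset.mul_sum, hf j]
    · calc ∑ i ∈ Finset.univ.filter (fun i => f i = j),
            (Finset.univ.filter fun x => σ i x = 1).card
          = ∑ i ∈ Finset.univ.filter (fun i => f i = j), (k - a i) :=
            Finset.sum_congr rfl fun i _ => by rw [← hσ1 i]
        _ = 2 * k := hsum2
    · calc ∑ i ∈ Finset.univ.filter (fun i => f i = j),
            (Finset.univ.filter fun x => σ i x = 2).card
          = ∑ i ∈ Finset.univ.filter (fun i => f i = j), (k - a i) :=
            Finset.sum_congr rfl fun i _ => by rw [← hσ2 i]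
        _ = 2 * k := hsum2
  have hpart : IsRegularPartition G P := by
    refine ⟨?_, ?_, ?_, ?_⟩
    · -- nonempty
      intro j
      have hfib : (Finset.univ.filter fun i => f i = j).Nonempty := by
        rcases Finset.eq_empty_or_nonempty (Finset.univ.filter fun i => f i = j) with h | h
        · exfalso; have := hf j; rw [h] at this; simp at this; omega
        · exact h
      obtain ⟨i, hi⟩ := hfib
      rw [Finset.mem_filter] at hi
      have hx0 : 0 < 2 * k := by omega
      have hy0 : 0 < 2 * k - 1 := by omega
      refine ⟨s(Xv i ⟨0, hx0⟩, Yv i ⟨0, hy0⟩), ?_, i, ⟨0, hx0⟩, Sym2.mem_mk_left _ _, hi.2⟩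
      exact (SimpleGraph.mem_edgeSet G).mpr (adj_Xv.mpr (Or.inl ⟨⟨0, hy0⟩, rfl⟩))
    · -- disjoint
      intro j j' hjj'
      rw [Set.disjoint_left]
      intro e hj hj'
      exact hjj' (hPuniq j j' e hj hj')
    · -- union
      ext e
      simp only [Set.mem_iUnion]
      constructor
      · rintro ⟨j, hj⟩; exact hPsub j hj
      · intro he
        obtain ⟨i, x, hx⟩ := edge_has_X he
        exact ⟨f i, he, i, x, hx, rfl⟩
    · -- regular
      intro j
      refine ⟨2 * k, ?_⟩
      rintro v ⟨e, heP, hve⟩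
      obtain ⟨heE, i₀, x₀, hx₀, hfi₀⟩ := heP
      rw [edgeDeg_eq_ncard]
      rcases v with ⟨i, x | y⟩ | c
      · -- X vertex
        have hii : i = i₀ := (X_unique heE hve hx₀).1
        have hfij : f i = j := by rw [hii]; exact hfi₀
        have hseteq : {w : GV n k | s((Sum.inl (i, Sum.inl x) : GV n k), w) ∈ P j}
            = {w : GV n k | (∃ y, w = Yv i y) ∨ w = Uv (σ i x)} := by
          ext w
          constructor
          · intro hw
            exact adj_Xv.mp (hPsub j hw)
          · intro hw
            have hadj : G.Adj (Xv i x) w := adj_Xv.mpr hw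
            exact ⟨hadj, i, x, Sym2.mem_mk_left _ _, hfij⟩
        rw [hseteq, ncard_nbhdX hk]
      · -- Y vertex
        have hfi : f i = j := by
          have hne : (Yv i y : GV n k) ≠ Xv i₀ x₀ := by simp [Xv, Yv]
          have hadj : G.Adj (Yv i y) (Xv i₀ x₀) := mem_mem_adj heE hve hx₀ hne
          obtain ⟨x', hx'⟩ := adj_Yv.mp hadj
          obtain ⟨rfl, rfl⟩ := Xv_inj.mp hx'.symm
          exact hfi₀
        have hseteq : {w : GV n k | s((Sum.inl (i, Sum.inr y) : GV n k), w) ∈ P j}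
            = {w : GV n k | ∃ x, w = Xv i x} := by
          ext w
          constructor
          · intro hw
            exact adj_Yv.mp (hPsub j hw)
          · rintro ⟨x, rfl⟩
            have hadj : G.Adj (Yv i y) (Xv i x) := adj_Yv.mpr ⟨x, rfl⟩
            exact ⟨hadj, i, x, Sym2.mem_mk_right _ _, hfi⟩
        rw [hseteq, ncard_nbhdY]
      · -- extra vertex
        exact hdegU j c
  exact Nat.sInf_le ⟨P, hpart⟩

end Gadget4
section Gadget5

lemma regSet_nonempty {V : Type*} [Fintype V] (G : SimpleGraph V) :
    {t | ∃ P : Fin t → Set (Sym2 V), IsRegularPartition G P}.Nonempty := by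
  classical
  set s : Finset (Sym2 V) := G.edgeSet.toFinset with hs
  refine ⟨s.card, fun i => {(s.equivFin.symm i : Sym2 V)}, ?_, ?_, ?_, ?_⟩
  · intro i; exact ⟨_, rfl⟩
  · intro i j hij
    simp only [Set.disjoint_singleton_left, Set.mem_singleton_iff]
    intro h
    exact hij (s.equivFin.symm.injective (Subtype.ext h))
  · ext e
    simp only [Set.mem_iUnion, Set.mem_singleton_iff]
    constructor
    · rintro ⟨i, rfl⟩
      have := (s.equivFin.symm i).2
      exact Set.mem_toFinset.mp this
    · intro he
      exact ⟨s.equivFin ⟨e, Set.mem_toFinset.mpr he⟩, by rw [Equiv.symm_apply_apply]⟩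
  · intro i
    refine ⟨1, ?_⟩
    rintro v ⟨e, he, hve⟩
    simp only [Set.mem_singleton_iff] at he
    have hset : {e' ∈ ({(↑(s.equivFin.symm i) : Sym2 V)} : Set (Sym2 V)) | v ∈ e'}
        = {(↑(s.equivFin.symm i) : Sym2 V)} := by
      ext e'
      simp only [Set.mem_setOf_eq, Set.mem_singleton_iff]
      exact ⟨fun h => h.1, fun h => ⟨h, by rw [h, ← he]; exact hve⟩⟩
    rw [edgeDeg, hset, Set.ncard_singleton]

end Gadget5
section Gadget6

variable {n k : ℕ} {σ : Fin (3 * n) → Fin (2 * k) → Fin 3}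

lemma f_of_regNum_le (hk : 1 ≤ k) (a : Fin (3 * n) → ℕ)
    (hsum : ∑ i, a i = n * k)
    (hσ0 : ∀ i, (Finset.univ.filter fun x => σ i x = 0).card = 2 * a i)
    (h : regNum (gadgetGraph n k σ) ≤ n) :
    ∃ f : Fin (3 * n) → Fin n,
      ∀ j : Fin n, ∑ i ∈ Finset.univ.filter fun i => f i = j, a i = k := by
  classical
  set G := gadgetGraph n k σ with hG
  -- extract a partition with t ≤ n parts
  obtain ⟨t, htn, P, hP⟩ :
      ∃ t ≤ n, ∃ P : Fin t → Set (Sym2 (GV n k)), IsRegularPartition G P :=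
    ⟨_, h, Nat.sInf_mem (regSet_nonempty G)⟩
  obtain ⟨hne, hdisj, hun, hreg⟩ := hP
  choose r hr using hreg
  have hPsub : ∀ j, P j ⊆ G.edgeSet := fun j => hun ▸ Set.subset_iUnion P j
  have hx0 : 0 < 2 * k := by omega
  have hy0 : 0 < 2 * k - 1 := by omega
  -- degrees in G
  have hdegX : ∀ (i : Fin (3 * n)) (x : Fin (2 * k)),
      {w : GV n k | s(Xv i x, w) ∈ G.edgeSet}.ncard = 2 * k := by
    intro i x
    have : {w : GV n k | s(Xv i x, w) ∈ G.edgeSet}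
        = {w : GV n k | (∃ y, w = Yv i y) ∨ w = Uv (σ i x)} := by
      ext w
      exact ⟨fun hw => adj_Xv.mp hw, fun hw => adj_Xv.mpr hw⟩
    rw [this, ncard_nbhdX hk]
  have hdegY : ∀ (i : Fin (3 * n)) (y : Fin (2 * k - 1)),
      {w : GV n k | s(Yv i y, w) ∈ G.edgeSet}.ncard = 2 * k := by
    intro i y
    have : {w : GV n k | s(Yv i y, w) ∈ G.edgeSet} = {w : GV n k | ∃ x, w = Xv i x} := by
      ext w
      exact ⟨fun hw => adj_Yv.mp hw, fun hw => adj_Yv.mpr hw⟩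
    rw [this, ncard_nbhdY]
  have hdegU : {w : GV n k | s(Uv 0, w) ∈ G.edgeSet}.ncard = 2 * (n * k) := by
    have : {w : GV n k | s(Uv 0, w) ∈ G.edgeSet}
        = {w : GV n k | ∃ i x, w = Xv i x ∧ σ i x = 0} := by
      ext w
      exact ⟨fun hw => adj_Uv.mp hw, fun hw => adj_Uv.mpr hw⟩
    rw [this, ncard_X_set]
    calc ∑ i, (Finset.univ.filter fun x => σ i x = 0).card
        = ∑ i, 2 * a i := Finset.sum_congr rfl fun i _ => by rw [← hσ0 i]
      _ = 2 * (n * k) := by rw [← Finset.mul_sum, hsum]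
  -- each part's degree is at most 2k
  have hrle : ∀ j, r j ≤ 2 * k := by
    intro j
    obtain ⟨e, he⟩ := hne j
    obtain ⟨i, x, hx⟩ := edge_has_X (hPsub j he)
    have h1 : edgeDeg (P j) (Xv i x) = r j := hr j _ ⟨e, he, hx⟩
    rw [← h1, ← hdegX i x, edgeDeg_eq_ncard]
    exact Set.ncard_le_ncard (fun w hw => hPsub j hw) (Set.toFinite _)
  set d : Fin t → ℕ := fun j => edgeDeg (P j) (Uv 0) with hd
  have hdle : ∀ j, d j ≤ 2 * k := by
    intro j
    by_cases hx : ∃ e ∈ P j, (Uv 0 : GV n k) ∈ e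
    · rw [hd]; simp only; rw [hr j _ hx]; exact hrle j
    · have : d j = 0 := by
        rw [hd]; simp only [edgeDeg_eq_ncard]
        have : {w : GV n k | s(Uv 0, w) ∈ P j} = ∅ := by
          ext w
          simp only [Set.mem_setOf_eq, Set.mem_empty_iff_false, iff_false]
          intro hw
          exact hx ⟨s(Uv 0, w), hw, Sym2.mem_mk_left _ _⟩
        rw [this, Set.ncard_empty]
      omega
  have hsumd : ∑ j, d j = 2 * (n * k) := by
    have h1 : ∀ j, d j = {w : GV n k | s(Uv 0, w) ∈ P j}.ncard := fun j =>
      edgeDeg_eq_ncard _ _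
    have h2 : (⋃ j, {w : GV n k | s(Uv 0, w) ∈ P j}) = {w : GV n k | s(Uv 0, w) ∈ G.edgeSet} := by
      ext w
      simp only [Set.mem_iUnion, Set.mem_setOf_eq]
      rw [← hun]
      simp [Set.mem_iUnion]
    calc ∑ j, d j = ∑ j, {w : GV n k | s(Uv 0, w) ∈ P j}.ncard :=
          Finset.sum_congr rfl fun j _ => h1 j
      _ = (⋃ j, {w : GV n k | s(Uv 0, w) ∈ P j}).ncard := by
          rw [ncard_iUnion_fin]
          intro i j hij
          rw [Set.disjoint_left]
          intro w hwi hwj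
          exact Set.disjoint_left.mp (hdisj i j hij) hwi hwj
      _ = 2 * (n * k) := by rw [h2, hdegU]
  -- t = n and each d j = 2k
  have htsum : ∑ j : Fin t, (2 * k) = t * (2 * k) := by
    rw [Finset.sum_const, Finset.card_univ, Fintype.card_fin, smul_eq_mul]
  have h2nk : 2 * (n * k) = n * (2 * k) := by ring
  have htn' : t = n := by
    have hle : n * (2 * k) ≤ t * (2 * k) := by
      rw [← h2nk, ← hsumd, ← htsum]
      exact Finset.sum_le_sum fun j _ => hdle j
    have := Nat.le_of_mul_le_mul_right hle (by omega : 0 < 2 * k)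
    omega
  have hdeq : ∀ j, d j = 2 * k := by
    intro j
    by_contra hne'
    have hlt : d j < 2 * k := lt_of_le_of_ne (hdle j) hne'
    have : ∑ j', d j' < ∑ j' : Fin t, (2 * k) :=
      Finset.sum_lt_sum (fun j' _ => hdle j') ⟨j, Finset.mem_univ j, hlt⟩
    rw [hsumd, htsum, htn', ← h2nk] at this
    exact lt_irrefl _ this
  have htn'' : n = t := htn'.symm
  subst htn''
  -- every part is 2k-regular
  have hreg2k : ∀ j, IsRegularEdgeSet (P j) (2 * k) := by
    intro j
    have hnz : {w : GV n k | s(Uv 0, w) ∈ P j}.Nonempty := by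
      rw [← Set.ncard_pos (Set.toFinite _), ← edgeDeg_eq_ncard]
      have := hdeq j
      rw [hd] at this
      simp only at this
      omega
    obtain ⟨w, hw⟩ := hnz
    have hrj : r j = 2 * k := by
      have h1 : edgeDeg (P j) (Uv 0) = r j :=
        hr j _ ⟨s(Uv 0, w), hw, Sym2.mem_mk_left _ _⟩
      have h2 := hdeq j
      rw [hd] at h2
      simp only at h2
      omega
    exact hrj ▸ hr j
  -- saturation
  have hsat : ∀ (j : Fin n) (v : GV n k),
      {w : GV n k | s(v, w) ∈ G.edgeSet}.ncard = 2 * k →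
      (∃ e ∈ P j, v ∈ e) → ∀ e' ∈ G.edgeSet, v ∈ e' → e' ∈ P j := by
    intro j v hdeg hex e' he' hve'
    have h1 : edgeDeg (P j) v = 2 * k := hreg2k j v hex
    have hsub : {w : GV n k | s(v, w) ∈ P j} ⊆ {w : GV n k | s(v, w) ∈ G.edgeSet} :=
      fun w hw => hPsub j hw
    have hseteq : {w : GV n k | s(v, w) ∈ P j} = {w : GV n k | s(v, w) ∈ G.edgeSet} := by
      refine Set.eq_of_subset_of_ncard_le hsub ?_ (Set.toFinite _)
      rw [hdeg, ← edgeDeg_eq_ncard, h1]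
    obtain ⟨w', rfl⟩ := Sym2.mem_iff_exists.1 hve'
    exact (Set.ext_iff.1 hseteq w').2 he'
  -- define f via the base edges
  have hbase : ∀ i : Fin (3 * n),
      ∃ j, s(Xv i ⟨0, hx0⟩, (Yv i ⟨0, hy0⟩ : GV n k)) ∈ P j := by
    intro i
    have he : s(Xv i ⟨0, hx0⟩, (Yv i ⟨0, hy0⟩ : GV n k)) ∈ G.edgeSet :=
      (SimpleGraph.mem_edgeSet G).mpr (adj_Xv.mpr (Or.inl ⟨⟨0, hy0⟩, rfl⟩))
    rw [← hun] at he
    exact Set.mem_iUnion.mp he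
  choose f hfbase using hbase
  -- every edge touching copy i is in part f i
  have hcopy : ∀ (i : Fin (3 * n)) (e : Sym2 (GV n k)), e ∈ G.edgeSet →
      (∃ x, (Xv i x : GV n k) ∈ e) → e ∈ P (f i) := by
    rintro i e he ⟨x, hx⟩
    have hexyE : s(Xv i x, (Yv i ⟨0, hy0⟩ : GV n k)) ∈ G.edgeSet :=
      (SimpleGraph.mem_edgeSet G).mpr (adj_Xv.mpr (Or.inl ⟨⟨0, hy0⟩, rfl⟩))
    have hstep1 : s(Xv i x, (Yv i ⟨0, hy0⟩ : GV n k)) ∈ P (f i) :=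
      hsat (f i) (Yv i ⟨0, hy0⟩) (hdegY i ⟨0, hy0⟩)
        ⟨_, hfbase i, Sym2.mem_mk_right _ _⟩ _ hexyE (Sym2.mem_mk_right _ _)
    exact hsat (f i) (Xv i x) (hdegX i x) ⟨_, hstep1, Sym2.mem_mk_left _ _⟩ e he hx
  refine ⟨f, fun j => ?_⟩
  -- count the edges of part j at u
  have hUset : {w : GV n k | s(Uv 0, w) ∈ P j}
      = {w : GV n k | ∃ i x, w = Xv i x ∧ (f i = j ∧ σ i x = 0)} := by
    ext w
    constructor
    · intro hw
      have he := hPsub j hw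
      obtain ⟨i, x, rfl, hc⟩ := adj_Uv.mp he
      have hmem : s(Uv 0, (Xv i x : GV n k)) ∈ P (f i) :=
        hcopy i _ he ⟨x, Sym2.mem_mk_right _ _⟩
      have hj : f i = j := by
        by_contra hne'
        exact Set.disjoint_left.mp (hdisj (f i) j hne') hmem hw
      exact ⟨i, x, rfl, hj, hc⟩
    · rintro ⟨i, x, rfl, hj, hc⟩
      have he : s(Uv 0, (Xv i x : GV n k)) ∈ G.edgeSet :=
        (SimpleGraph.mem_edgeSet G).mpr (adj_Uv.mpr ⟨i, x, rfl, hc⟩)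
      rw [← hj]
      exact hcopy i _ he ⟨x, Sym2.mem_mk_right _ _⟩
  have hcount : {w : GV n k | s(Uv 0, w) ∈ P j}.ncard = 2 * k := by
    rw [← edgeDeg_eq_ncard]
    have := hdeq j
    rw [hd] at this
    simpa using this
  rw [hUset, ncard_X_set] at hcount
  have hsplit : ∀ i : Fin (3 * n),
      (Finset.univ.filter fun x => f i = j ∧ σ i x = 0).card
        = if f i = j then (Finset.univ.filter fun x => σ i x = 0).card else 0 := by
    intro i
    split_ifs with hfij
    · congr 1; ext x; simp [hfij]
    · simp only [Finset.card_eq_zero]; ext x; simp [hfij]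
  rw [Finset.sum_congr rfl fun i _ => hsplit i, ← Finset.sum_filter] at hcount
  have hfinal : ∑ i ∈ Finset.univ.filter (fun i => f i = j),
      (Finset.univ.filter fun x => σ i x = 0).card
        = 2 * ∑ i ∈ Finset.univ.filter (fun i => f i = j), a i := by
    rw [Finset.mul_sum]
    exact Finset.sum_congr rfl fun i _ => by rw [← hσ0 i]
  rw [hfinal] at hcount
  omega

end Gadget6
/-- `reg(G_{A,k}) ≤ n` iff the numbers `a₁, …, a_{3n}` can be partitioned
into `n` groups each summing to `k`. -/
theorem regNum_gadget_iff_threePartition (n k : ℕ) (hn : 1 ≤ n) (hk : 1 ≤ k)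
    (a : Fin (3 * n) → ℕ)
    (ha : ∀ i, k < 4 * a i ∧ 2 * a i < k)
    (hsum : ∑ i, a i = n * k)
    (σ : Fin (3 * n) → Fin (2 * k) → Fin 3)
    (hσ0 : ∀ i, (Finset.univ.filter fun x => σ i x = 0).card = 2 * a i)
    (hσ1 : ∀ i, (Finset.univ.filter fun x => σ i x = 1).card = k - a i)
    (hσ2 : ∀ i, (Finset.univ.filter fun x => σ i x = 2).card = k - a i) :
    regNum (gadgetGraph n k σ) ≤ n ↔
      ∃ f : Fin (3 * n) → Fin n,
        ∀ j : Fin n, ∑ i ∈ Finset.univ.filter fun i => f i = j, a i = k := by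
  constructor
  · intro h
    exact f_of_regNum_le hk a hsum hσ0 h
  · rintro ⟨f, hf⟩
    exact regNum_le_of_f hk a ha hσ0 hσ1 hσ2 f hf
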